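/- In the product category Setᵒᵖ × Set, the pair (Setᵒᵖ×𝟎, 𝟏×Set), where Setᵒᵖ×𝟎 is the full subcategory of objects (X, Y) with Y an initial object of Set (i.e., Y empty) and 𝟏×Set is the full subcategory of objects (X, Y) with X a terminal object of Setᵒᵖ (i.e., X empty), is a pretorsion theory. -/

import Mathlib

open CategoryTheory CategoryTheory.Limits

universe w v v₁ v₂ u u₁ u₂

/-- A morphism is *null* relative to a class of objects `Z` if it factors
through some object of `Z`. -/
def IsNull {C : Type u} [Category.{v} C] (Z : Set C) {X Y : C} (f : X ⟶ Y) : Prop :=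
  ∃ (W : C) (_ : W ∈ Z) (g : X ⟶ W) (h : W ⟶ Y), g ≫ h = f

/-- `m : T ⟶ X` is a kernel of `e : X ⟶ F` relative to the ideal of morphisms
factoring through objects of `Z`. -/
def IsRelKernel {C : Type u} [Category.{v} C] (Z : Set C) {T X F : C}
    (m : T ⟶ X) (e : X ⟶ F) : Prop :=
  IsNull Z (m ≫ e) ∧ ∀ ⦃U : C⦄ (u : U ⟶ X), IsNull Z (u ≫ e) → ∃! u' : U ⟶ T, u' ≫ m = u

/-- `e : X ⟶ F` is a cokernel of `m : T ⟶ X` relative to the ideal of morphisms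
factoring through objects of `Z`. -/
def IsRelCokernel {C : Type u} [Category.{v} C] (Z : Set C) {T X F : C}
    (m : T ⟶ X) (e : X ⟶ F) : Prop :=
  IsNull Z (m ≫ e) ∧ ∀ ⦃V : C⦄ (v : X ⟶ V), IsNull Z (m ≫ v) → ∃! v' : F ⟶ V, e ≫ v' = v

/-- `T ⟶ X ⟶ F` is a short exact sequence relative to the null ideal determined by `Z`. -/
def IsShortExact {C : Type u} [Category.{v} C] (Z : Set C) {T X F : C}
    (m : T ⟶ X) (e : X ⟶ F) : Prop :=
  IsRelKernel Z m e ∧ IsRelCokernel Z m e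

/-- `(T, F)` is a pretorsion theory: (T1) every morphism from a torsion object to a
torsion-free object is null, and (T2) every object is the middle term of a short
exact sequence with torsion left part and torsion-free right part. -/
def IsPretorsionTheory {C : Type u} [Category.{v} C] (T F : Set C) : Prop :=
  (∀ ⦃A B : C⦄, A ∈ T → B ∈ F → ∀ f : A ⟶ B, IsNull (T ∩ F) f) ∧
  (∀ X : C, ∃ (A B : C) (_ : A ∈ T) (_ : B ∈ F) (m : A ⟶ X) (e : X ⟶ B),
    IsShortExact (T ∩ F) m e)

/-- in the product category `Setᵒᵖ × Set`, the pair consisting of the full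
subcategory of objects `(X, Y)` with `Y` an initial object of `Set` and the full
subcategory of objects `(X, Y)` with `X` a terminal object of `Setᵒᵖ` is a pretorsion
theory. -/
lemma isEmpty_of_isInitial {Y : Type u} (h : IsInitial Y) : IsEmpty Y :=
  ⟨fun y => ((h.to (PEmpty : Type u) : Y → PEmpty) y).elim⟩

lemma isEmpty_of_isTerminal {X : (Type u)ᵒᵖ} (h : IsTerminal X) : IsEmpty X.unop :=
  ⟨fun x => (((h.from (Opposite.op (PEmpty : Type u))).unop : X.unop → PEmpty) x).elim⟩

noncomputable def pemptyInitial : IsInitial (PEmpty : Type u) :=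
  IsInitial.ofUniqueHom (fun _ => TypeCat.ofHom fun x => PEmpty.elim x) (fun _ _ => ConcreteCategory.hom_ext _ _ fun x => PEmpty.elim x)

noncomputable def pemptyTerminalOp : IsTerminal (Opposite.op (PEmpty : Type u)) :=
  terminalOpOfInitial pemptyInitial

lemma op_hom_ext {P Q : (Type u)ᵒᵖ} (hQ : IsEmpty Q.unop) (f g : P ⟶ Q) : f = g :=
  Quiver.Hom.unop_inj (ConcreteCategory.hom_ext _ _ fun x => hQ.elim x)

lemma type_hom_ext {P Q : Type u} (hP : IsEmpty P) (f g : P ⟶ Q) : f = g :=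
  ConcreteCategory.hom_ext _ _ fun x => hP.elim x

theorem stmt15 :
    IsPretorsionTheory
      {P : (Type u)ᵒᵖ × Type u | Nonempty (IsInitial P.2)}
      {P : (Type u)ᵒᵖ × Type u | Nonempty (IsTerminal P.1)} := by
  constructor
  · -- (T1)
    intro A B hA hB f
    have eA : IsEmpty A.2 := isEmpty_of_isInitial hA.some
    have eB : IsEmpty B.1.unop := isEmpty_of_isTerminal hB.some
    refine ⟨(Opposite.op (PEmpty : Type u), (PEmpty : Type u)),
      ⟨⟨pemptyInitial⟩, ⟨pemptyTerminalOp⟩⟩,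
      (Quiver.Hom.op (X := (PEmpty : Type u)) (Y := A.1.unop) (TypeCat.ofHom fun x => x.elim),
        TypeCat.ofHom fun a => (eA.false a).elim),
      (Quiver.Hom.op (X := B.1.unop) (Y := (PEmpty : Type u)) (TypeCat.ofHom fun x => (eB.false x).elim),
        TypeCat.ofHom fun x => x.elim), ?_⟩
    exact Prod.ext (op_hom_ext eB _ _) (type_hom_ext eA _ _)
  · -- (T2)
    intro X
    refine ⟨(X.1, (PEmpty : Type u)), (Opposite.op (PEmpty : Type u), X.2),
      ⟨pemptyInitial⟩, ⟨pemptyTerminalOp⟩,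
      (𝟙 X.1, TypeCat.ofHom fun x => x.elim),
      (Quiver.Hom.op (X := (PEmpty : Type u)) (Y := X.1.unop) (TypeCat.ofHom fun x => x.elim), 𝟙 X.2),
      ?_⟩
    refine ⟨⟨?_, ?_⟩, ⟨?_, ?_⟩⟩
    · -- null 1
      refine ⟨(Opposite.op (PEmpty : Type u), (PEmpty : Type u)),
        ⟨⟨pemptyInitial⟩, ⟨pemptyTerminalOp⟩⟩,
        (Quiver.Hom.op (X := (PEmpty : Type u)) (Y := X.1.unop) (TypeCat.ofHom fun x => x.elim),
          𝟙 (PEmpty : Type u)),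
        (𝟙 (Opposite.op (PEmpty : Type u)), TypeCat.ofHom fun x => x.elim), ?_⟩
      exact Prod.ext (op_hom_ext (inferInstanceAs (IsEmpty PEmpty)) _ _) (type_hom_ext (inferInstanceAs (IsEmpty PEmpty)) _ _)
    · -- kernel universal property
      intro U u hu
      obtain ⟨W, ⟨hW1, hW2⟩, g, h, -⟩ := hu
      have eU : IsEmpty U.2 := ⟨fun y => (isEmpty_of_isInitial hW1.some).false (g.2 y)⟩
      refine ⟨(u.1, TypeCat.ofHom fun y => eU.elim y), ?_, ?_⟩
      · exact Prod.ext (Category.comp_id _) (type_hom_ext eU _ _)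
      · intro w hw
        refine Prod.ext ?_ (type_hom_ext eU _ _)
        have := congrArg Prod.fst hw
        simpa using this
    · -- null 2
      refine ⟨(Opposite.op (PEmpty : Type u), (PEmpty : Type u)),
        ⟨⟨pemptyInitial⟩, ⟨pemptyTerminalOp⟩⟩,
        (Quiver.Hom.op (X := (PEmpty : Type u)) (Y := X.1.unop) (TypeCat.ofHom fun x => x.elim),
          𝟙 (PEmpty : Type u)),
        (𝟙 (Opposite.op (PEmpty : Type u)), TypeCat.ofHom fun x => x.elim), ?_⟩
      exact Prod.ext (op_hom_ext (inferInstanceAs (IsEmpty PEmpty)) _ _) (type_hom_ext (inferInstanceAs (IsEmpty PEmpty)) _ _)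
    · -- cokernel universal property
      intro V v hv
      obtain ⟨W, ⟨hW1, hW2⟩, g, h, hgh⟩ := hv
      have h1 : (𝟙 X.1 ≫ v.1) = g.1 ≫ h.1 := (congrArg Prod.fst hgh).symm
      have eV : IsEmpty V.1.unop :=
        ⟨fun x => (isEmpty_of_isTerminal hW2.some).false (h.1.unop x)⟩
      refine ⟨(Quiver.Hom.op (X := V.1.unop) (Y := (PEmpty : Type u)) (TypeCat.ofHom fun x => eV.elim x),
        v.2), ?_, ?_⟩
      · exact Prod.ext (op_hom_ext eV _ _) (Category.id_comp _)
      · intro w hw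
        refine Prod.ext (op_hom_ext eV _ _) ?_
        have := congrArg Prod.snd hw
        simpa using this
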